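/- If a digraph D contains a strong minor model of a digraph F in which every vertex of F has total degree (in-degree plus out-degree) at most 3 and in-degree at most 2 and out-degree at most 2, then D contains a subdivision of F. -/

import Mathlib

/-- Strong connectivity of the subdigraph induced on `S` by the digraph with arc relation `A`:
every ordered pair of vertices of `S` is joined by a directed path inside `S`. -/
def SConnOn {V : Type*} (A : V → V → Prop) (S : Set V) : Prop :=
  ∀ u ∈ S, ∀ v ∈ S, Relation.ReflTransGen (fun x y => x ∈ S ∧ y ∈ S ∧ A x y) u v

/-- The subdigraph induced on `S` contains no directed cycle. -/
def AcyclicOn {V : Type*} (A : V → V → Prop) (S : Set V) : Prop :=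
  ¬ ∃ u v, u ∈ S ∧ v ∈ S ∧ A u v ∧
      Relation.ReflTransGen (fun x y => x ∈ S ∧ y ∈ S ∧ A x y) v u

/-- The induced subdigraph on `S` admits an acyclic `k`-coloring. -/
def DiColorableOn {V : Type*} (A : V → V → Prop) (S : Set V) (k : ℕ) : Prop :=
  ∃ f : V → Fin k, ∀ c : Fin k, AcyclicOn A (S ∩ {v | f v = c})

/-- The digraph `(V, A)` admits an acyclic `k`-coloring. -/
def DiColorable {V : Type*} (A : V → V → Prop) (k : ℕ) : Prop :=
  DiColorableOn A Set.univ k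

/-- The dichromatic number of the digraph `(V, A)`, as an extended natural number. -/
noncomputable def diChromaticNumber {V : Type*} (A : V → V → Prop) : ℕ∞ :=
  sInf {n : ℕ∞ | ∃ k : ℕ, n = (k : ℕ∞) ∧ DiColorable A k}

/-- The digraph `(V, A)` contains the digraph `(W, B)` as a strong minor: a subdigraph of it
is a strong `(W, B)`-minor model, i.e. there are pairwise disjoint nonempty branch sets,
each inducing a strongly connected subdigraph, with an arc from `X w₁` to `X w₂`
for every arc `(w₁, w₂)` of `B`. -/
def IsStrongMinor {V W : Type*} (A : V → V → Prop) (B : W → W → Prop) : Prop :=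
  ∃ X : W → Set V,
    (∀ w, (X w).Nonempty) ∧
    (∀ w₁ w₂, w₁ ≠ w₂ → Disjoint (X w₁) (X w₂)) ∧
    (∀ w, SConnOn A (X w)) ∧
    (∀ w₁ w₂, B w₁ w₂ → ∃ x ∈ X w₁, ∃ y ∈ X w₂, A x y)

/-- `l` is a directed path in `(V, A)` from `x` to `y` (a list of distinct vertices
following arcs of `A`). -/
def IsDiPath {V : Type*} (A : V → V → Prop) (l : List V) (x y : V) : Prop :=
  List.Chain' A l ∧ l.Nodup ∧ l.head? = some x ∧ l.getLast? = some y

namespace SubdivAux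

variable {V : Type*} {R : V → V → Prop}

lemma head?_eq_cons {l : List V} {a : V} (h : l.head? = some a) : ∃ t, l = a :: t := by
  cases l with
  | nil => simp at h
  | cons x t =>
    simp only [List.head?_cons, Option.some.injEq] at h
    exact ⟨t, by rw [h]⟩

lemma dip_ne_nil {l : List V} {a c : V} (h : IsDiPath R l a c) : l ≠ [] := by
  rintro rfl; simp [IsDiPath] at h

lemma dip_head_mem {l : List V} {a c : V} (h : IsDiPath R l a c) : a ∈ l :=
  List.mem_of_mem_head? (by rw [h.2.2.1]; exact rfl)

lemma mem_getLast? {l : List V} {c : V} (h : l.getLast? = some c) : c ∈ l := by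
  have hne : l ≠ [] := by rintro rfl; simp at h
  have := List.getLast?_eq_getLast hne
  rw [this, Option.some.injEq] at h
  rw [← h]; exact List.getLast_mem hne

lemma dip_last_mem {l : List V} {a c : V} (h : IsDiPath R l a c) : c ∈ l :=
  mem_getLast? h.2.2.2

lemma dip_imp {R' : V → V → Prop} (hRR' : ∀ a b, R a b → R' a b)
    {l : List V} {a c : V} (h : IsDiPath R l a c) : IsDiPath R' l a c :=
  ⟨h.1.imp hRR', h.2.1, h.2.2.1, h.2.2.2⟩

lemma dip_reverse {l : List V} {a c : V} (h : IsDiPath R l a c) :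
    IsDiPath (flip R) l.reverse c a := by
  obtain ⟨hc, hnd, hh, hl⟩ := h
  refine ⟨?_, List.nodup_reverse.2 hnd, ?_, ?_⟩
  · exact List.isChain_reverse.2 hc
  · rw [List.head?_reverse]; exact hl
  · rw [List.getLast?_reverse]; exact hh

lemma mem_dropLast_or {l : List V} {c : V} (hl : l.getLast? = some c) {z : V} (hz : z ∈ l) :
    z = c ∨ z ∈ l.dropLast := by
  have hne : l ≠ [] := by rintro rfl; simp at hl
  have hdec := List.dropLast_append_getLast hne
  have hc : l.getLast hne = c := by
    have := List.getLast?_eq_getLast hne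
    rw [this, Option.some.injEq] at hl; exact hl
  rw [← hdec] at hz
  rcases List.mem_append.1 hz with h | h
  · exact Or.inr h
  · simp only [List.mem_singleton] at h
    exact Or.inl (h.trans hc)

lemma head_not_mem_tail {l : List V} {a : V} (hnd : l.Nodup) (hh : l.head? = some a) :
    a ∉ l.tail := by
  obtain ⟨t, rfl⟩ := head?_eq_cons hh
  exact (List.nodup_cons.1 hnd).1

lemma last_not_mem_dropLast {l : List V} {c : V} (hnd : l.Nodup) (hl : l.getLast? = some c) :
    c ∉ l.dropLast := by
  have hne : l ≠ [] := by rintro rfl; simp at hl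
  have hdec := List.dropLast_append_getLast hne
  have hc : l.getLast hne = c := by
    have := List.getLast?_eq_getLast hne
    rw [this, Option.some.injEq] at hl; exact hl
  rw [← hdec] at hnd
  intro hmem
  exact (List.disjoint_of_nodup_append hnd) hmem (by simp [hc])

/-- From reflexive-transitive reachability extract a nodup directed path. -/
lemma exists_diPath {x y : V} (h : Relation.ReflTransGen R x y) :
    ∃ l, IsDiPath R l x y := by
  induction h with
  | refl => exact ⟨[x], List.isChain_singleton x, List.nodup_singleton x, rfl, rfl⟩
  | @tail b c _ hbc ih =>
    obtain ⟨l, hc, hnd, hh, hl⟩ := ih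
    by_cases hcl : c ∈ l
    · obtain ⟨s, t, rfl⟩ := List.append_of_mem hcl
      obtain ⟨hcs, hcct, hlink⟩ := List.isChain_append.1 hc
      refine ⟨s ++ [c], ?_, ?_, ?_, ?_⟩
      · exact List.isChain_append.2 ⟨hcs, List.isChain_singleton c,
          fun p hp q hq => by simp only [List.head?_cons, Option.mem_def,
            Option.some.injEq] at hq ⊢; exact hq ▸ hlink p hp c rfl⟩
      · exact hnd.sublist ((List.append_sublist_append_left s).2 ((List.singleton_sublist).2 (List.mem_cons_self)))
      · rw [List.head?_append] at hh ⊢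
        cases s with
        | nil => simpa using hh
        | cons a s' => simpa using hh
      · rw [List.getLast?_append]; rfl
    · refine ⟨l ++ [c], ?_, ?_, ?_, ?_⟩
      · exact List.isChain_append.2 ⟨hc, List.isChain_singleton c,
          fun p hp q hq => by
            simp only [Option.mem_def] at hp hq
            rw [hl, Option.some.injEq] at hp
            simp only [List.head?_cons, Option.some.injEq] at hq
            exact hp ▸ hq ▸ hbc⟩
      · exact hnd.append (List.nodup_singleton c) (by
          intro z hz hz'; simp only [List.mem_singleton] at hz'; exact hcl (hz' ▸ hz))
      · rw [List.head?_append, hh]; rfl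
      · rw [List.getLast?_append]; rfl

/-- All vertices of a chain for the `S`-restricted relation lie in `S`. -/
lemma mem_S_of_chain' {S : Set V} {A : V → V → Prop} :
    ∀ (l : List V), List.Chain' (fun a b => a ∈ S ∧ b ∈ S ∧ A a b) l →
      ∀ x, l.head? = some x → x ∈ S → ∀ z ∈ l, z ∈ S := by
  intro l
  induction l with
  | nil => intro _ x hx; simp at hx
  | cons a t ih =>
    intro hc x hx hxS z hz
    simp only [List.head?_cons, Option.some.injEq] at hx
    subst hx
    rcases List.mem_cons.1 hz with rfl | hzt
    · exact hxS
    · cases t with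
      | nil => simp at hzt
      | cons b t' =>
        have h1 := (List.isChain_cons_cons.1 hc).1
        exact ih (List.isChain_cons_cons.1 hc).2 b rfl h1.2.1 z hzt

lemma diPath_S {S : Set V} {A : V → V → Prop} {l : List V} {a c : V}
    (h : IsDiPath (fun p q => p ∈ S ∧ q ∈ S ∧ A p q) l a c) (ha : a ∈ S) :
    IsDiPath A l a c ∧ ∀ z ∈ l, z ∈ S :=
  ⟨dip_imp (fun _ _ hh => hh.2.2) h, fun z hz => mem_S_of_chain' l h.1 a h.2.2.1 ha z hz⟩

/-- First hit of a set `T` along a path. -/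
lemma firstHit (T : Set V) :
    ∀ (q : List V), List.Chain' R q → q.Nodup →
      ∀ a, q.head? = some a → (∃ z ∈ q, z ∈ T) →
      ∃ r b, r.Sublist q ∧ IsDiPath R r a b ∧ b ∈ T ∧ ∀ z ∈ r.dropLast, z ∉ T := by
  intro q
  induction q with
  | nil => intro _ _ a ha; simp at ha
  | cons x q' ih =>
    intro hc hnd a ha hhit
    simp only [List.head?_cons, Option.some.injEq] at ha
    subst ha
    by_cases hxT : x ∈ T
    · exact ⟨[x], x, (List.singleton_sublist).2 (List.mem_cons_self),
        ⟨List.isChain_singleton x, List.nodup_singleton x, rfl, rfl⟩, hxT, by simp⟩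
    · cases q' with
      | nil =>
        obtain ⟨z, hz, hzT⟩ := hhit
        simp only [List.mem_singleton] at hz
        exact absurd (hz ▸ hzT) hxT
      | cons y q'' =>
        have hc' := (List.isChain_cons_cons.1 hc).2
        have hxy := (List.isChain_cons_cons.1 hc).1
        have hhit' : ∃ z ∈ y :: q'', z ∈ T := by
          obtain ⟨z, hz, hzT⟩ := hhit
          rcases List.mem_cons.1 hz with rfl | hz'
          · exact absurd hzT hxT
          · exact ⟨z, hz', hzT⟩
        obtain ⟨r, b, hsub, hpath, hbT, hdrop⟩ :=
          ih hc' (List.nodup_cons.1 hnd).2 y rfl hhit'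
        obtain ⟨r', rfl⟩ := head?_eq_cons hpath.2.2.1
        refine ⟨x :: y :: r', b, List.cons_sublist_cons.2 hsub, ?_, hbT, ?_⟩
        · refine ⟨List.isChain_cons_cons.2 ⟨hxy, hpath.1⟩, ?_, rfl, ?_⟩
          · refine List.nodup_cons.2 ⟨?_, hpath.2.1⟩
            intro hmem
            exact (List.nodup_cons.1 hnd).1 (hsub.subset hmem)
          · rw [show (x :: y :: r') = [x] ++ (y :: r') by rfl, List.getLast?_append]
            rw [hpath.2.2.2]; rfl
        · intro z hz
          rw [List.dropLast_cons₂] at hz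
          rcases List.mem_cons.1 hz with rfl | hz'
          · exact hxT
          · exact hdrop z hz'

/-- Split a nodup path at an interior vertex. -/
lemma splitAt {p : List V} {a c : V} (hp : IsDiPath R p a c) {b : V} (hb : b ∈ p) :
    ∃ p1 p2, IsDiPath R p1 a b ∧ IsDiPath R p2 b c ∧
      (∀ z, z ∈ p1 → z ∈ p2 → z = b) ∧ (∀ z ∈ p1, z ∈ p) ∧ (∀ z ∈ p2, z ∈ p) := by
  obtain ⟨s, t, rfl⟩ := List.append_of_mem hb
  obtain ⟨hc, hnd, hh, hl⟩ := hp
  obtain ⟨hcs, hcbt, hlink⟩ := List.isChain_append.1 hc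
  have hdisj := List.disjoint_of_nodup_append hnd
  refine ⟨s ++ [b], b :: t, ⟨?_, ?_, ?_, ?_⟩, ⟨hcbt, hnd.sublist (List.sublist_append_right s _), rfl, ?_⟩, ?_, ?_, ?_⟩
  · exact List.isChain_append.2 ⟨hcs, List.isChain_singleton b,
      fun p hp q hq => by simp only [List.head?_cons, Option.mem_def,
        Option.some.injEq] at hq ⊢; exact hq ▸ hlink p hp b rfl⟩
  · exact hnd.sublist ((List.append_sublist_append_left s).2 ((List.singleton_sublist).2 (List.mem_cons_self)))
  · rw [List.head?_append] at hh ⊢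
    cases s with
    | nil => simpa using hh
    | cons a' s' => simpa using hh
  · rw [List.getLast?_append]; rfl
  · rw [List.getLast?_append] at hl
    cases ht : (b :: t).getLast? with
    | none => simp at ht
    | some d => rw [ht] at hl; simpa using hl
  · intro z hz1 hz2
    rcases List.mem_append.1 hz1 with hzs | hzb
    · exact absurd hz2 (hdisj hzs)
    · simpa using hzb
  · intro z hz
    rcases List.mem_append.1 hz with hzs | hzb
    · exact List.mem_append.2 (Or.inl hzs)
    · simp only [List.mem_singleton] at hzb
      exact List.mem_append.2 (Or.inr (hzb ▸ List.mem_cons_self))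
  · intro z hz
    exact List.mem_append.2 (Or.inr hz)


/-- Core spider lemma: entries form a subsingleton index set, at most two exits. -/
lemma spider_core {V W : Type*} (A : V → V → Prop) (S : Set V)
    (hconn : ∀ u ∈ S, ∀ v ∈ S, Relation.ReflTransGen (fun p q => p ∈ S ∧ q ∈ S ∧ A p q) u v)
    (hne : S.Nonempty)
    (IY IX : Set W) (y x : W → V)
    (hy : ∀ u ∈ IY, y u ∈ S) (hx : ∀ v ∈ IX, x v ∈ S)
    (hYss : IY.Subsingleton) (hX2 : IX.encard ≤ 2) :
    ∃ b ∈ S, ∃ I O : W → List V,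
      (∀ u ∈ IY, IsDiPath A (I u) (y u) b ∧ ∀ z ∈ I u, z ∈ S) ∧
      (∀ v ∈ IX, IsDiPath A (O v) b (x v) ∧ ∀ z ∈ O v, z ∈ S) ∧
      (∀ u ∈ IY, ∀ u' ∈ IY, u ≠ u' → ∀ z, z ∈ I u → z ∈ I u' → z = b) ∧
      (∀ v ∈ IX, ∀ v' ∈ IX, v ≠ v' → ∀ z, z ∈ O v → z ∈ O v' → z = b) ∧
      (∀ u ∈ IY, ∀ v ∈ IX, ∀ z, z ∈ I u → z ∈ O v → z = b) := by
  classical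
  set RS : V → V → Prop := fun p q => p ∈ S ∧ q ∈ S ∧ A p q with hRS
  have pathS : ∀ a ∈ S, ∀ c ∈ S, ∃ l, IsDiPath RS l a c :=
    fun a ha c hc => exists_diPath (hconn a ha c hc)
  obtain ⟨yy, hyyS, hyy⟩ : ∃ yy ∈ S, ∀ u ∈ IY, y u = yy := by
    by_cases hE : ∃ u, u ∈ IY
    · obtain ⟨u0, hu0⟩ := hE
      exact ⟨y u0, hy u0 hu0, fun u hu => by rw [hYss hu hu0]⟩
    · obtain ⟨s0, hs0⟩ := hne
      exact ⟨s0, hs0, fun u hu => absurd ⟨u, hu⟩ hE⟩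
  by_cases hEX : ∃ v, v ∈ IX
  swap
  · -- no exits
    refine ⟨yy, hyyS, fun _ => [yy], fun _ => [yy], ?_, ?_, ?_, ?_, ?_⟩
    · intro u hu
      rw [hyy u hu]
      exact ⟨⟨List.isChain_singleton yy, List.nodup_singleton yy, rfl, rfl⟩,
        fun z hz => by simp only [List.mem_singleton] at hz; exact hz ▸ hyyS⟩
    · intro v hv; exact absurd ⟨v, hv⟩ hEX
    · intro u hu u' hu' hne'; exact absurd (hYss hu hu') hne'
    · intro v hv; exact absurd ⟨v, hv⟩ hEX
    · intro u hu v hv; exact absurd ⟨v, hv⟩ hEX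
  obtain ⟨v1, hv1⟩ := hEX
  by_cases hall : ∀ v ∈ IX, x v = x v1
  · -- all exits coincide
    obtain ⟨p, hp⟩ := pathS yy hyyS (x v1) (hx v1 hv1)
    obtain ⟨hpA, hpS⟩ := diPath_S hp hyyS
    refine ⟨x v1, hx v1 hv1, fun _ => p, fun _ => [x v1], ?_, ?_, ?_, ?_, ?_⟩
    · intro u hu
      rw [hyy u hu]
      exact ⟨hpA, hpS⟩
    · intro v hv
      refine ⟨⟨List.isChain_singleton _, List.nodup_singleton _, rfl, by rw [hall v hv]; rfl⟩,
        fun z hz => by simp only [List.mem_singleton] at hz; exact hz ▸ hx v1 hv1⟩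
    · intro u hu u' hu' hne'; exact absurd (hYss hu hu') hne'
    · intro v _ v' _ _ z hz _
      simpa using hz
    · intro u hu v hv z _ hz
      simpa using hz
  · -- two distinct exit vertices
    push_neg at hall
    obtain ⟨v2, hv2, hx21⟩ := hall
    have hv21 : v2 ≠ v1 := fun h => hx21 (by rw [h])
    have hmem2 : ∀ v ∈ IX, v = v1 ∨ v = v2 := by
      intro v hv
      by_contra hcon
      push_neg at hcon
      have hsub : ({v1, v2, v} : Set W) ⊆ IX := by
        intro w hw
        rcases hw with rfl | rfl | rfl
        · exact hv1
        · exact hv2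
        · exact hv
      have h3 : ({v1, v2, v} : Set W).encard = 3 := by
        rw [Set.encard_insert_of_notMem (by
            simp only [Set.mem_insert_iff, Set.mem_singleton_iff]
            rintro (rfl | rfl)
            · exact hv21 rfl
            · exact hcon.1 rfl),
          Set.encard_insert_of_notMem (by
            simp only [Set.mem_singleton_iff]
            rintro rfl
            exact hcon.2 rfl),
          Set.encard_singleton]
        rfl
      have := (Set.encard_mono hsub).trans hX2
      rw [h3] at this
      norm_num at this
    obtain ⟨p, hp⟩ := pathS yy hyyS (x v1) (hx v1 hv1)
    obtain ⟨q, hq⟩ := pathS yy hyyS (x v2) (hx v2 hv2)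
    have hpS := (diPath_S hp hyyS).2
    have hqS := (diPath_S hq hyyS).2
    have hqrev := dip_reverse hq
    have hhit : ∃ z ∈ q.reverse, z ∈ {z | z ∈ p} := by
      refine ⟨yy, ?_, dip_head_mem hp⟩
      rw [List.mem_reverse]
      exact dip_head_mem hq
    obtain ⟨r, b, hrsub, hrpath, hbT, hdrop⟩ :=
      firstHit {z | z ∈ p} q.reverse hqrev.1 hqrev.2.1 (x v2) hqrev.2.2.1 hhit
    have hbp : b ∈ p := hbT
    have hbS : b ∈ S := hpS b hbp
    obtain ⟨p1, p2, hp1, hp2, hsplit, hp1sub, hp2sub⟩ := splitAt hp hbp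
    have hO2 : IsDiPath RS r.reverse b (x v2) := dip_imp (fun _ _ h => h) (dip_reverse hrpath)
    have hO2p : ∀ z ∈ r.reverse, z ≠ b → z ∉ p := by
      intro z hz hzb
      rw [List.mem_reverse] at hz
      rcases mem_dropLast_or hrpath.2.2.2 hz with rfl | hzd
      · exact absurd rfl hzb
      · exact hdrop z hzd
    have hO2S : ∀ z ∈ r.reverse, z ∈ S := by
      intro z hz
      rw [List.mem_reverse] at hz
      exact hqS z (by
        have := hrsub.subset hz
        rwa [List.mem_reverse] at this)
    refine ⟨b, hbS, fun _ => p1, fun v => if v = v1 then p2 else r.reverse, ?_, ?_, ?_, ?_, ?_⟩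
    · intro u hu
      rw [hyy u hu]
      exact ⟨(diPath_S hp1 hyyS).1, fun z hz => hpS z (hp1sub z hz)⟩
    · intro v hv
      rcases hmem2 v hv with rfl | rfl
      · simp only [if_pos rfl]
        exact ⟨(diPath_S hp2 hbS).1, fun z hz => hpS z (hp2sub z hz)⟩
      · simp only [if_neg hv21]
        exact ⟨(diPath_S hO2 hbS).1, hO2S⟩
    · intro u hu u' hu' hne'; exact absurd (hYss hu hu') hne'
    · intro v hv v' hv' hvv' z hz hz'
      rcases hmem2 v hv with rfl | rfl <;> rcases hmem2 v' hv' with rfl | rfl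
      · exact absurd rfl hvv'
      · simp only [if_pos rfl] at hz
        simp only [if_neg hv21] at hz'
        by_contra hzb
        exact hO2p z hz' hzb (hp2sub z hz)
      · simp only [if_neg hv21] at hz
        simp only [if_pos rfl] at hz'
        by_contra hzb
        exact hO2p z hz hzb (hp2sub z hz')
      · exact absurd rfl hvv'
    · intro u hu v hv z hz hz'
      rcases hmem2 v hv with rfl | rfl
      · simp only [if_pos rfl] at hz'
        exact hsplit z hz hz'
      · simp only [if_neg hv21] at hz'
        by_contra hzb
        exact hO2p z hz' hzb (hp1sub z hz)

/-- Full spider lemma. -/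
lemma spider {V W : Type*} (A : V → V → Prop) (S : Set V)
    (hconn : ∀ u ∈ S, ∀ v ∈ S, Relation.ReflTransGen (fun p q => p ∈ S ∧ q ∈ S ∧ A p q) u v)
    (hne : S.Nonempty)
    (IY IX : Set W) (y x : W → V)
    (hy : ∀ u ∈ IY, y u ∈ S) (hx : ∀ v ∈ IX, x v ∈ S)
    (hss : IY.Subsingleton ∨ IX.Subsingleton)
    (hY2 : IY.encard ≤ 2) (hX2 : IX.encard ≤ 2) :
    ∃ b ∈ S, ∃ I O : W → List V,
      (∀ u ∈ IY, IsDiPath A (I u) (y u) b ∧ ∀ z ∈ I u, z ∈ S) ∧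
      (∀ v ∈ IX, IsDiPath A (O v) b (x v) ∧ ∀ z ∈ O v, z ∈ S) ∧
      (∀ u ∈ IY, ∀ u' ∈ IY, u ≠ u' → ∀ z, z ∈ I u → z ∈ I u' → z = b) ∧
      (∀ v ∈ IX, ∀ v' ∈ IX, v ≠ v' → ∀ z, z ∈ O v → z ∈ O v' → z = b) ∧
      (∀ u ∈ IY, ∀ v ∈ IX, ∀ z, z ∈ I u → z ∈ O v → z = b) := by
  rcases hss with hss | hss
  · exact spider_core A S hconn hne IY IX y x hy hx hss hX2
  · have hconn' : ∀ u ∈ S, ∀ v ∈ S,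
        Relation.ReflTransGen (fun p q => p ∈ S ∧ q ∈ S ∧ (flip A) p q) u v := by
      intro u hu v hv
      have h1 := (hconn v hv u hu).swap
      exact Relation.ReflTransGen.mono (r := Function.swap fun p q => p ∈ S ∧ q ∈ S ∧ A p q) (p := fun p q => p ∈ S ∧ q ∈ S ∧ (flip A) p q) (fun a b hab => ⟨hab.2.1, hab.1, hab.2.2⟩) u v h1
    obtain ⟨b, hbS, I', O', hI', hO', hII', hOO', hIO'⟩ :=
      spider_core (flip A) S hconn' hne IX IY x y hx hy hss hY2
    refine ⟨b, hbS, fun u => (O' u).reverse, fun v => (I' v).reverse, ?_, ?_, ?_, ?_, ?_⟩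
    · intro u hu
      refine ⟨dip_imp (fun _ _ h => h) (dip_reverse (hO' u hu).1), ?_⟩
      intro z hz
      rw [List.mem_reverse] at hz
      exact (hO' u hu).2 z hz
    · intro v hv
      refine ⟨dip_imp (fun _ _ h => h) (dip_reverse (hI' v hv).1), ?_⟩
      intro z hz
      rw [List.mem_reverse] at hz
      exact (hI' v hv).2 z hz
    · intro u hu u' hu' hne' z hz hz'
      rw [List.mem_reverse] at hz hz'
      exact hOO' u hu u' hu' hne' z hz hz'
    · intro v hv v' hv' hne' z hz hz'
      rw [List.mem_reverse] at hz hz'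
      exact hII' v hv v' hv' hne' z hz hz'
    · intro u hu v hv z hz hz'
      rw [List.mem_reverse] at hz hz'
      exact hIO' v hv u hu z hz' hz

lemma internal_eq {V : Type*} {l1 l2 : List V} (h1 : l1 ≠ []) (h2 : l2 ≠ []) :
    (l1 ++ l2).tail.dropLast = l1.tail ++ l2.dropLast := by
  cases l1 with
  | nil => exact absurd rfl h1
  | cons a t =>
    rw [List.cons_append, List.tail_cons, List.tail_cons, List.dropLast_append]
    rw [if_neg (by simpa using h2)]

end SubdivAux

section SubdivAuxSec
open SubdivAux

/-- If a digraph `D = (V, A)` contains a strong minor model of a (loopless)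
digraph `F = (W, B)` in which every vertex has in-degree at most `2`, out-degree at most `2`
and total degree at most `3`, then `D` contains a subdivision of `F`: injective branch
vertices `b`, and for every arc `(u, v)` of `F` a directed path in `D` from `b u` to `b v`,
such that these paths are internally vertex-disjoint and internally avoid all branch
vertices. -/
theorem subdivision_of_strongMinor_subcubic {V W : Type*}
    (A : V → V → Prop) (B : W → W → Prop)
    (hB_loopless : ∀ w, ¬ B w w)
    (hdeg : ∀ w : W, {y | B w y}.encard ≤ 2 ∧ {x | B x w}.encard ≤ 2 ∧
      {y | B w y}.encard + {x | B x w}.encard ≤ 3)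
    (h : IsStrongMinor A B) :
    ∃ (b : W → V) (P : W → W → List V),
      Function.Injective b ∧
      (∀ u v, B u v → IsDiPath A (P u v) (b u) (b v)) ∧
      (∀ u v, B u v → ∀ x ∈ (P u v).tail.dropLast, ∀ w, x ≠ b w) ∧
      (∀ u v u' v', B u v → B u' v' → (u, v) ≠ (u', v') →
        ∀ x ∈ (P u v).tail.dropLast, x ∉ (P u' v').tail.dropLast) := by

  classical
  obtain ⟨X, hXne, hXdisj, hXconn, hXarc⟩ := h
  have hsel : ∀ u v : W, ∃ p : V × V, B u v → p.1 ∈ X u ∧ p.2 ∈ X v ∧ A p.1 p.2 := by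
    intro u v
    by_cases hB : B u v
    · obtain ⟨a, ha, c, hc, hac⟩ := hXarc u v hB
      exact ⟨(a, c), fun _ => ⟨ha, hc, hac⟩⟩
    · exact ⟨((hXne u).choose, (hXne v).choose), fun hB' => absurd hB' hB⟩
  choose sel hselspec using hsel
  have hsp : ∀ w : W, ∃ b ∈ X w, ∃ I O : W → List V,
      (∀ u ∈ {u : W | B u w}, IsDiPath A (I u) ((sel u w).2) b ∧ ∀ z ∈ I u, z ∈ X w) ∧
      (∀ v ∈ {v : W | B w v}, IsDiPath A (O v) b ((sel w v).1) ∧ ∀ z ∈ O v, z ∈ X w) ∧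
      (∀ u ∈ {u : W | B u w}, ∀ u' ∈ {u : W | B u w}, u ≠ u' →
          ∀ z, z ∈ I u → z ∈ I u' → z = b) ∧
      (∀ v ∈ {v : W | B w v}, ∀ v' ∈ {v : W | B w v}, v ≠ v' →
          ∀ z, z ∈ O v → z ∈ O v' → z = b) ∧
      (∀ u ∈ {u : W | B u w}, ∀ v ∈ {v : W | B w v}, ∀ z, z ∈ I u → z ∈ O v → z = b) := by
    intro w
    obtain ⟨hout2, hin2, hsum⟩ := hdeg w
    have hss : ({u : W | B u w}).Subsingleton ∨ ({v : W | B w v}).Subsingleton := by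
      by_contra hcon
      push_neg at hcon
      have h1 := hcon.1
      have h2 := hcon.2
      obtain ⟨a1, ha1, b1, hb1, hne1⟩ := h1
      obtain ⟨a2, ha2, b2, hb2, hne2⟩ := h2
      have e1 : (2 : ℕ∞) ≤ ({u : W | B u w}).encard := by
        have : (1 : ℕ∞) < ({u : W | B u w}).encard :=
          Set.one_lt_encard_iff.2 ⟨a1, b1, ha1, hb1, hne1⟩
        exact Order.add_one_le_of_lt this
      have e2 : (2 : ℕ∞) ≤ ({v : W | B w v}).encard := by
        have : (1 : ℕ∞) < ({v : W | B w v}).encard :=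
          Set.one_lt_encard_iff.2 ⟨a2, b2, ha2, hb2, hne2⟩
        exact Order.add_one_le_of_lt this
      have : (4 : ℕ∞) ≤ 3 := le_trans (by
        calc (4 : ℕ∞) = 2 + 2 := by norm_num
        _ ≤ ({y | B w y}).encard + ({x | B x w}).encard := add_le_add e2 e1) hsum
      norm_num at this
    exact spider A (X w) (hXconn w) (hXne w) {u : W | B u w} {v : W | B w v}
      (fun u => (sel u w).2) (fun v => (sel w v).1)
      (fun u hu => (hselspec u w hu).2.1) (fun v hv => (hselspec w v hv).1)
      hss hin2 hout2
  choose bb hbbmem II OO hI hO hII hOO hIO using hsp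
  have hbinj : Function.Injective bb := by
    intro w w' hww'
    by_contra hne'
    exact Set.disjoint_left.1 (hXdisj w w' hne') (hbbmem w) (hww' ▸ hbbmem w')
  have hXuniq : ∀ {z : V} {w w' : W}, z ∈ X w → z ∈ X w' → w = w' := by
    intro z w w' hz hz'
    by_contra hne'
    exact Set.disjoint_left.1 (hXdisj w w' hne') hz hz'
  refine ⟨bb, fun u v => OO u v ++ II v u, hbinj, ?_, ?_, ?_⟩
  · -- paths
    intro u v hB
    have huv : u ≠ v := fun h => hB_loopless v (h ▸ hB)
    obtain ⟨hOp, hOS⟩ := hO u v hB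
    obtain ⟨hIp, hIS⟩ := hI v u hB
    have harc : A (sel u v).1 (sel u v).2 := (hselspec u v hB).2.2
    refine ⟨?_, ?_, ?_, ?_⟩
    · refine List.isChain_append.2 ⟨hOp.1, hIp.1, ?_⟩
      intro p hp q hq
      rw [Option.mem_def, hOp.2.2.2, Option.some.injEq] at hp
      rw [Option.mem_def, hIp.2.2.1, Option.some.injEq] at hq
      exact hp ▸ hq ▸ harc
    · refine hOp.2.1.append hIp.2.1 ?_
      intro z hz hz'
      exact Set.disjoint_left.1 (hXdisj u v huv) (hOS z hz) (hIS z hz')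
    · rw [List.head?_append, hOp.2.2.1]; rfl
    · rw [List.getLast?_append, hIp.2.2.2]; rfl
  · -- internal vertices avoid branch vertices
    intro u v hB z hz w
    obtain ⟨hOp, hOS⟩ := hO u v hB
    obtain ⟨hIp, hIS⟩ := hI v u hB
    rw [internal_eq (dip_ne_nil hOp) (dip_ne_nil hIp)] at hz
    rintro rfl
    rcases List.mem_append.1 hz with hzO | hzI
    · have hzu : bb w ∈ X u := hOS _ (List.mem_of_mem_tail hzO)
      have : w = u := hXuniq (hbbmem w) hzu
      subst this
      exact head_not_mem_tail hOp.2.1 hOp.2.2.1 hzO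
    · have hzv : bb w ∈ X v := hIS _ (List.mem_of_mem_dropLast hzI)
      have : w = v := hXuniq (hbbmem w) hzv
      subst this
      exact last_not_mem_dropLast hIp.2.1 hIp.2.2.2 hzI
  · -- internal disjointness across distinct arcs
    intro u v u' v' hB hB' hpairne z hz hz'
    obtain ⟨hOp, hOS⟩ := hO u v hB
    obtain ⟨hIp, hIS⟩ := hI v u hB
    obtain ⟨hOp', hOS'⟩ := hO u' v' hB'
    obtain ⟨hIp', hIS'⟩ := hI v' u' hB'
    rw [internal_eq (dip_ne_nil hOp) (dip_ne_nil hIp)] at hz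
    rw [internal_eq (dip_ne_nil hOp') (dip_ne_nil hIp')] at hz'
    rcases List.mem_append.1 hz with hzO | hzI <;>
      rcases List.mem_append.1 hz' with hzO' | hzI'
    · -- both in out-parts
      have huu' : u = u' := hXuniq (hOS _ (List.mem_of_mem_tail hzO))
        (hOS' _ (List.mem_of_mem_tail hzO'))
      subst huu'
      have hvv' : v ≠ v' := fun h => hpairne (by rw [h])
      have := hOO u v hB v' hB' hvv' z (List.mem_of_mem_tail hzO)
        (List.mem_of_mem_tail hzO')
      exact head_not_mem_tail hOp.2.1 hOp.2.2.1 (this ▸ hzO)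
    · -- out-part of (u,v), in-part of (u',v')
      have huv' : u = v' := hXuniq (hOS _ (List.mem_of_mem_tail hzO))
        (hIS' _ (List.mem_of_mem_dropLast hzI'))
      subst huv'
      have := hIO u u' hB' v hB z (List.mem_of_mem_dropLast hzI')
        (List.mem_of_mem_tail hzO)
      exact head_not_mem_tail hOp.2.1 hOp.2.2.1 (this ▸ hzO)
    · -- in-part of (u,v), out-part of (u',v')
      have hvu' : v = u' := hXuniq (hIS _ (List.mem_of_mem_dropLast hzI))
        (hOS' _ (List.mem_of_mem_tail hzO'))
      subst hvu'
      have := hIO v u hB v' hB' z (List.mem_of_mem_dropLast hzI)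
        (List.mem_of_mem_tail hzO')
      exact last_not_mem_dropLast hIp.2.1 hIp.2.2.2 (this ▸ hzI)
    · -- both in in-parts
      have hvv' : v = v' := hXuniq (hIS _ (List.mem_of_mem_dropLast hzI))
        (hIS' _ (List.mem_of_mem_dropLast hzI'))
      subst hvv'
      have huu' : u ≠ u' := fun h => hpairne (by rw [h])
      have := hII v u hB u' hB' huu' z (List.mem_of_mem_dropLast hzI)
        (List.mem_of_mem_dropLast hzI')
      exact last_not_mem_dropLast hIp.2.1 hIp.2.2.2 (this ▸ hzI)

end SubdivAuxSec
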